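/- In the Laurent polynomial ring ℤ[x, x⁻¹], the ideal generated by the two elements 2 and x − 1 is not projective as a ℤ[x, x⁻¹]-module. In particular, ℤ[x, x⁻¹] is not a hereditary ring. -/

import Mathlib

open LaurentPolynomial

noncomputable section AuxLaurent

/-- Evaluation at `T = 1` as an algebra hom `ℤ[T,T⁻¹] →ₐ[ℤ] ℤ`. -/
def epsAux : LaurentPolynomial ℤ →ₐ[ℤ] ℤ :=
  AddMonoidAlgebra.lift ℤ ℤ ℤ 1

/-- The monoid hom `Multiplicative ℤ →* LaurentPolynomial (ZMod 2)`, `n ↦ T n`. -/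
def TmonAux : Multiplicative ℤ →* LaurentPolynomial (ZMod 2) where
  toFun n := T (Multiplicative.toAdd n)
  map_one' := T_zero
  map_mul' x y := by
    show (T (Multiplicative.toAdd x + Multiplicative.toAdd y) : LaurentPolynomial (ZMod 2)) = _
    rw [T_add]

/-- Reduction of coefficients mod 2, `ℤ[T,T⁻¹] →ₐ[ℤ] (ZMod 2)[T,T⁻¹]`. -/
def phiAux : LaurentPolynomial ℤ →ₐ[ℤ] LaurentPolynomial (ZMod 2) :=
  AddMonoidAlgebra.lift ℤ _ ℤ TmonAux

/-- Evaluation at `T = 1` over `ZMod 2`. -/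
def epsAux2 : LaurentPolynomial (ZMod 2) →ₐ[ZMod 2] ZMod 2 :=
  AddMonoidAlgebra.lift (ZMod 2) (ZMod 2) ℤ 1

lemma eps2_T (n : ℤ) : epsAux2 (T n) = 1 := by
  have : (T n : LaurentPolynomial (ZMod 2)) = AddMonoidAlgebra.single n 1 := rfl
  rw [this, epsAux2, AddMonoidAlgebra.lift_single]; simp

lemma eps_comp_phi (f : LaurentPolynomial ℤ) :
    epsAux2 (phiAux f) = ((epsAux f : ℤ) : ZMod 2) := by
  induction f using AddMonoidAlgebra.induction_linear with
  | zero => simp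
  | add a b ha hb => simp [map_add, ha, hb]
  | single n r =>
    show epsAux2 (phiAux (AddMonoidAlgebra.single n r))
      = ((epsAux (AddMonoidAlgebra.single n r) : ℤ) : ZMod 2)
    rw [epsAux, phiAux, AddMonoidAlgebra.lift_single, AddMonoidAlgebra.lift_single]
    simp [TmonAux]
    rw [eps2_T, mul_one]

lemma eps_T (n : ℤ) : epsAux (T n) = 1 := by
  have : (T n : LaurentPolynomial ℤ) = AddMonoidAlgebra.single n 1 := rfl
  rw [this, epsAux, AddMonoidAlgebra.lift_single]; simp

lemma phi_T (n : ℤ) : phiAux (T n) = T n := by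
  have : (T n : LaurentPolynomial ℤ) = AddMonoidAlgebra.single n 1 := rfl
  rw [this, phiAux, AddMonoidAlgebra.lift_single]; simp [TmonAux]

lemma T_one_ne_one : (T 1 : LaurentPolynomial (ZMod 2)) ≠ 1 := by
  intro h
  rw [← T_zero] at h
  have : (1 : ℤ) = 0 :=
    AddMonoidAlgebra.single_left_injective (one_ne_zero (α := ZMod 2)) h
  exact one_ne_zero this

end AuxLaurent

/-- In the Laurent polynomial ring `ℤ[x, x⁻¹]`, the ideal generated by `2` and `x − 1`
is not projective as a `ℤ[x, x⁻¹]`-module; in particular `ℤ[x, x⁻¹]` is not a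
hereditary ring (not every ideal is projective). -/
theorem laurent_ideal_two_X_sub_one_not_projective :
    ¬ Module.Projective (LaurentPolynomial ℤ)
        (Ideal.span {(2 : LaurentPolynomial ℤ), T 1 - 1}) ∧
    ¬ ∀ I : Ideal (LaurentPolynomial ℤ), Module.Projective (LaurentPolynomial ℤ) I := by
  set R := LaurentPolynomial ℤ
  set I : Ideal R := Ideal.span {(2 : R), T 1 - 1} with hI
  have key : ¬ Module.Projective R I := by
    intro hproj
    -- the surjection R × R → I
    have hmem : ∀ a b : R, 2 * a + (T 1 - 1) * b ∈ I := by
      intro a b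
      exact Ideal.mem_span_pair.mpr ⟨a, b, by ring⟩
    let f0 : R × R →ₗ[R] R :=
      (2 : R) • LinearMap.fst R R R + (T 1 - 1 : R) • LinearMap.snd R R R
    have hf0 : ∀ p : R × R, f0 p = 2 * p.1 + (T 1 - 1) * p.2 := by
      intro p; simp [f0, smul_eq_mul]
    let f : R × R →ₗ[R] I := f0.codRestrict (I : Submodule R R)
      (fun p => by rw [hf0]; exact hmem p.1 p.2)
    have hfs : Function.Surjective f := by
      rintro ⟨z, hz⟩
      obtain ⟨a, b, hab⟩ := Ideal.mem_span_pair.mp hz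
      refine ⟨(a, b), ?_⟩
      apply Subtype.ext
      show f0 (a, b) = z
      rw [hf0]; rw [← hab]; ring
    obtain ⟨σ, hσ⟩ := Module.projective_lifting_property f LinearMap.id hfs
    have h2I : (2 : R) ∈ I := Ideal.subset_span (by simp)
    have hTI : (T 1 - 1 : R) ∈ I := Ideal.subset_span (by simp)
    have hσval : ∀ m : I, 2 * (σ m).1 + (T 1 - 1) * (σ m).2 = (m : R) := by
      intro m
      have := congrArg (fun g => ((g m : I) : R)) hσ
      simpa [f, f0, smul_eq_mul, LinearMap.codRestrict] using this
    set p := σ ⟨2, h2I⟩ with hp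
    set q := σ ⟨T 1 - 1, hTI⟩ with hq
    -- E1 : 2 * p.1 + (T 1 - 1) * p.2 = 2
    have E1 : 2 * p.1 + (T 1 - 1) * p.2 = 2 := hσval _
    -- E3 : (T 1 - 1) • p = 2 • q
    have E3 : (T 1 - 1 : R) • p = (2 : R) • q := by
      rw [hp, hq, ← map_smul, ← map_smul]
      congr 1
      apply Subtype.ext
      show (T 1 - 1 : R) * 2 = 2 * (T 1 - 1)
      ring
    have E3a : (T 1 - 1) * p.1 = 2 * q.1 := congrArg Prod.fst E3
    -- apply evaluation at 1 to E1
    have hEps : epsAux p.1 = 1 := by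
      have := congrArg epsAux E1
      simp only [map_add, map_mul, map_sub, map_one, map_ofNat, eps_T] at this
      omega
    -- apply reduction mod 2 to E3a
    have hPhi : phiAux p.1 = 0 := by
      have h1 := congrArg phiAux E3a
      simp only [map_mul, map_sub, map_one, map_ofNat, phi_T] at h1
      have h2 : ((2 : LaurentPolynomial (ZMod 2))) = 0 := by
        rw [show (2 : LaurentPolynomial (ZMod 2)) = LaurentPolynomial.C 2 from
          (map_ofNat _ 2).symm, show (2 : ZMod 2) = 0 by decide, map_zero]
      rw [h2, zero_mul] at h1
      rcases mul_eq_zero.mp h1 with h | h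
      · exact absurd (sub_eq_zero.mp h) T_one_ne_one
      · exact h
    -- contradiction
    have := eps_comp_phi p.1
    rw [hPhi, hEps] at this
    simp at this
  refine ⟨key, fun h => key (h I)⟩
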